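/- arXiv:2309.04007 — 4 statements merged into one kernel-verified Lean document; each statement's English description precedes it below -/
import Mathlib

section
/- A skew-symmetric bilinear form φ on an infinite-dimensional vector space V is nondegenerate if and only if every finite subset of V is contained in a finite-dimensional subspace on which φ restricts to a nondegenerate form. -/
section aux
variable {F V : Type*} [Field F] [AddCommGroup V] [Module F V]
variable (φ : LinearMap.BilinForm F V)

/-- The radical of `φ` restricted to `U`. -/
noncomputable def bilinRad (U : Submodule F V) : Submodule F V :=
  U ⊓ φ.orthogonal U

lemma mem_bilinRad {U : Submodule F V} {x : V} :
    x ∈ bilinRad φ U ↔ x ∈ U ∧ ∀ n ∈ U, φ n x = 0 := by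
  simp [bilinRad, LinearMap.BilinForm.mem_orthogonal_iff, LinearMap.BilinForm.IsOrtho]

lemma bilinRad_le (U : Submodule F V) : bilinRad φ U ≤ U := inf_le_left

lemma nondeg_of_rad_bot (hskew : ∀ u v : V, φ u v = - φ v u)
    {U : Submodule F V} (h : bilinRad φ U = ⊥) :
    ∀ u ∈ U, u ≠ 0 → ∃ u' ∈ U, φ u u' ≠ 0 := by
  intro u hu hu0
  by_contra hcon
  push_neg at hcon
  have : u ∈ bilinRad φ U := by
    rw [mem_bilinRad]
    refine ⟨hu, fun n hn => ?_⟩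
    have := hcon n hn
    rw [hskew n u, this, neg_zero]
  rw [h] at this
  exact hu0 this

lemma key_lemma (hskew : ∀ u v : V, φ u v = - φ v u)
    (hnd : ∀ v : V, v ≠ 0 → ∃ u : V, φ v u ≠ 0) :
    ∀ (n : ℕ) (U : Submodule F V), FiniteDimensional F U →
      Module.finrank F (bilinRad φ U) ≤ n →
      ∃ W : Submodule F V, U ≤ W ∧ FiniteDimensional F W ∧
        ∀ u ∈ W, u ≠ 0 → ∃ u' ∈ W, φ u u' ≠ 0 := by
  intro n
  induction n with
  | zero =>
    intro U hU hr
    haveI := hU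
    haveI : FiniteDimensional F (bilinRad φ U) :=
      Submodule.finiteDimensional_of_le (bilinRad_le φ U)
    have hbot : bilinRad φ U = ⊥ := by
      rw [← Submodule.finrank_eq_zero (R := F)]
      omega
    exact ⟨U, le_refl _, hU, nondeg_of_rad_bot φ hskew hbot⟩
  | succ n ih =>
    intro U hU hr
    haveI := hU
    haveI : FiniteDimensional F (bilinRad φ U) :=
      Submodule.finiteDimensional_of_le (bilinRad_le φ U)
    by_cases hbot : bilinRad φ U = ⊥
    · exact ⟨U, le_refl _, hU, nondeg_of_rad_bot φ hskew hbot⟩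
    · obtain ⟨r, hrmem, hr0⟩ := Submodule.exists_mem_ne_zero_of_ne_bot hbot
      rw [mem_bilinRad] at hrmem
      obtain ⟨hrU, hrad⟩ := hrmem
      obtain ⟨w, hw⟩ := hnd r hr0
      set U' := U ⊔ Submodule.span F {w} with hU'
      haveI : FiniteDimensional F U' := by
        apply Submodule.finiteDimensional_sup
      have hUle : U ≤ U' := le_sup_left
      have hwU' : w ∈ U' := Submodule.mem_sup_right (Submodule.mem_span_singleton_self w)
      -- rad U' < rad U
      have hradlt : bilinRad φ U' < bilinRad φ U := by
        have hle : bilinRad φ U' ≤ bilinRad φ U := by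
          intro x hx
          rw [mem_bilinRad] at hx ⊢
          obtain ⟨hxU', hxorth⟩ := hx
          -- decompose x = u + c • w
          obtain ⟨u, hu, y, hy, hxu⟩ := Submodule.mem_sup.mp hxU'
          obtain ⟨c, hc⟩ := Submodule.mem_span_singleton.mp hy
          have hφrx : φ r x = 0 := hxorth r (hUle hrU)
          have hφru : φ r u = 0 := by
            rw [hskew r u, hrad u hu, neg_zero]
          have hc0 : c = 0 := by
            rw [← hxu, ← hc] at hφrx
            rw [map_add, hφru, map_smul, zero_add, smul_eq_mul] at hφrx
            rcases mul_eq_zero.mp hφrx with h | h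
            · exact h
            · exact absurd h hw
          have hxeq : x = u := by rw [← hxu, ← hc, hc0, zero_smul, add_zero]
          subst hxeq
          exact ⟨hu, fun m hm => hxorth m (hUle hm)⟩
        refine lt_of_le_of_ne hle (fun heq => ?_)
        have : r ∈ bilinRad φ U' := heq ▸ (mem_bilinRad φ |>.mpr ⟨hrU, hrad⟩)
        rw [mem_bilinRad] at this
        apply hw
        rw [hskew r w, this.2 w hwU', neg_zero]
      have hlt : Module.finrank F (bilinRad φ U') < Module.finrank F (bilinRad φ U) :=
        Submodule.finrank_lt_finrank_of_lt hradlt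
      obtain ⟨W, hW1, hW2, hW3⟩ := ih U' ‹_› (by omega)
      exact ⟨W, le_trans hUle hW1, hW2, hW3⟩

end aux

/-- A skew-symmetric bilinear form `φ` on an infinite-dimensional vector
space `V` is nondegenerate if and only if every finite subset of `V` is contained in a
finite-dimensional subspace on which `φ` restricts to a nondegenerate form. -/
theorem bilin_nondegenerate_iff_locally_nondegenerate
    {F V : Type*} [Field F] [AddCommGroup V] [Module F V]
    (hV : ¬ FiniteDimensional F V)
    (φ : LinearMap.BilinForm F V)
    (hskew : ∀ u v : V, φ u v = - φ v u) :
    (∀ v : V, v ≠ 0 → ∃ u : V, φ v u ≠ 0) ↔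
      (∀ A : Finset V, ∃ U : Submodule F V, FiniteDimensional F U ∧ (A : Set V) ⊆ (U : Set V) ∧
        ∀ u ∈ U, u ≠ 0 → ∃ u' ∈ U, φ u u' ≠ 0) := by
  constructor
  · intro hnd A
    set U₀ : Submodule F V := Submodule.span F (A : Set V) with hU₀
    haveI : FiniteDimensional F U₀ := by
      apply FiniteDimensional.span_of_finite
      exact A.finite_toSet
    haveI : FiniteDimensional F (bilinRad φ U₀) :=
      Submodule.finiteDimensional_of_le (bilinRad_le φ U₀)
    obtain ⟨W, hW1, hW2, hW3⟩ := key_lemma φ hskew hnd (Module.finrank F (bilinRad φ U₀)) U₀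
      ‹_› (le_refl _)
    exact ⟨W, hW2, le_trans (Submodule.subset_span) hW1, hW3⟩
  · intro hloc v hv
    obtain ⟨U, _, hsub, hnd⟩ := hloc {v}
    have hvU : v ∈ U := hsub (by simp)
    obtain ⟨u', _, hu'⟩ := hnd v hvU hv
    exact ⟨u', hu'⟩
end

section
/- Every nondegenerate alternating bilinear form on a vector space of countably infinite dimension admits a symplectic basis. Consequently, any two nondegenerate alternating bilinear forms on vector spaces of countably infinite dimension over the same field are isometric. -/
open Cardinal

set_option linter.unusedSectionVars false

namespace SympAux

variable {F : Type*} [Field F] {V : Type*} [AddCommGroup V] [Module F V]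

lemma skew (φ : LinearMap.BilinForm F V) (halt : ∀ v : V, φ v v = 0) (u v : V) :
    φ u v = - φ v u := by
  have h := halt (u + v)
  simp only [map_add, LinearMap.add_apply, halt] at h
  linear_combination h

/-- The set of all vectors occurring in a list of pairs. -/
def vecs (L : List (V × V)) : Set V := {w | ∃ p ∈ L, p.1 = w ∨ p.2 = w}

lemma vecs_mono {L L' : List (V × V)} (h : ∀ p ∈ L, p ∈ L') : vecs L ⊆ vecs L' := by
  rintro w ⟨p, hp, hw⟩; exact ⟨p, h p hp, hw⟩

lemma vecs_finite (L : List (V × V)) : (vecs L).Finite := by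
  have : vecs L ⊆ (Prod.fst '' {p | p ∈ L}) ∪ (Prod.snd '' {p | p ∈ L}) := by
    rintro w ⟨p, hp, hw | hw⟩
    · exact Or.inl ⟨p, hp, hw⟩
    · exact Or.inr ⟨p, hp, hw⟩
  exact Set.Finite.subset ((L.finite_toSet.image _).union (L.finite_toSet.image _)) this

/-- Symplectic condition on a list of pairs. -/
def SympL (φ : LinearMap.BilinForm F V) (L : List (V × V)) : Prop :=
  ∀ i j : ℕ, ∀ hi : i < L.length, ∀ hj : j < L.length,
    φ (L[i].1) (L[j].2) = (if i = j then 1 else 0) ∧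
    φ (L[i].1) (L[j].1) = 0 ∧ φ (L[i].2) (L[j].2) = 0

/-- Orthogonal projection away from the span of the pairs. -/
noncomputable def proj (φ : LinearMap.BilinForm F V) (L : List (V × V)) (v : V) : V :=
  v - ∑ i : Fin L.length, (φ (L[(i : ℕ)].1) v • L[(i : ℕ)].2 - φ (L[(i : ℕ)].2) v • L[(i : ℕ)].1)

lemma mem_vecs_fst (L : List (V × V)) {i : ℕ} (hi : i < L.length) :
    (L[i].1 : V) ∈ vecs L := ⟨L[i], List.getElem_mem hi, Or.inl rfl⟩

lemma mem_vecs_snd (L : List (V × V)) {i : ℕ} (hi : i < L.length) :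
    (L[i].2 : V) ∈ vecs L := ⟨L[i], List.getElem_mem hi, Or.inr rfl⟩

lemma sub_proj_mem_span (φ : LinearMap.BilinForm F V) (L : List (V × V)) (v : V) :
    v - proj φ L v ∈ Submodule.span F (vecs L) := by
  rw [proj]
  simp only [sub_sub_cancel]
  refine Submodule.sum_mem _ fun i _ => Submodule.sub_mem _ ?_ ?_
  · exact Submodule.smul_mem _ _ (Submodule.subset_span (mem_vecs_snd L i.isLt))
  · exact Submodule.smul_mem _ _ (Submodule.subset_span (mem_vecs_fst L i.isLt))

/-- The projection is orthogonal to all the pair vectors. -/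
lemma apply_proj (φ : LinearMap.BilinForm F V) (halt : ∀ v : V, φ v v = 0)
    {L : List (V × V)} (hL : SympL φ L) (v : V) {i : ℕ} (hi : i < L.length) :
    φ (L[i].1) (proj φ L v) = 0 ∧ φ (L[i].2) (proj φ L v) = 0 := by
  constructor
  · rw [proj, map_sub, map_sum]
    have : ∀ k : Fin L.length,
        φ (L[i].1) (φ (L[(k:ℕ)].1) v • L[(k:ℕ)].2 - φ (L[(k:ℕ)].2) v • L[(k:ℕ)].1)
        = if k = (⟨i, hi⟩ : Fin L.length) then φ (L[i].1) v else 0 := by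
      intro k
      obtain ⟨h1, h2, h3⟩ := hL i k hi k.isLt
      rw [map_sub, map_smul, map_smul, h1, h2]
      by_cases hk : (k : ℕ) = i
      · subst hk; simp
      · simp [Fin.ext_iff, hk, Ne.symm hk]
    rw [Finset.sum_congr rfl (fun k _ => this k), Finset.sum_ite_eq' Finset.univ]
    simp
  · rw [proj, map_sub, map_sum]
    have : ∀ k : Fin L.length,
        φ (L[i].2) (φ (L[(k:ℕ)].1) v • L[(k:ℕ)].2 - φ (L[(k:ℕ)].2) v • L[(k:ℕ)].1)
        = if k = (⟨i, hi⟩ : Fin L.length) then φ (L[i].2) v else 0 := by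
      intro k
      obtain ⟨_, _, h3⟩ := hL i k hi k.isLt
      obtain ⟨h1', _, _⟩ := hL k i k.isLt hi
      rw [map_sub, map_smul, map_smul, h3, skew φ halt (L[i].2) (L[(k:ℕ)].1), h1']
      by_cases hk : (k : ℕ) = i
      · subst hk; simp
      · simp [Fin.ext_iff, hk, Ne.symm hk]
    rw [Finset.sum_congr rfl (fun k _ => this k), Finset.sum_ite_eq' Finset.univ]
    simp

/-- If `x` is orthogonal to all pair vectors, `φ x (proj t) = φ x t`. -/
lemma apply_proj_of_orth (φ : LinearMap.BilinForm F V) (halt : ∀ v : V, φ v v = 0)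
    {L : List (V × V)} {x : V}
    (hx : ∀ i : ℕ, ∀ hi : i < L.length, φ (L[i].1) x = 0 ∧ φ (L[i].2) x = 0) (t : V) :
    φ x (proj φ L t) = φ x t := by
  rw [proj, map_sub, map_sum]
  have : ∀ k : Fin L.length,
      φ x (φ (L[(k:ℕ)].1) t • L[(k:ℕ)].2 - φ (L[(k:ℕ)].2) t • L[(k:ℕ)].1) = 0 := by
    intro k
    obtain ⟨h1, h2⟩ := hx k k.isLt
    rw [map_sub, map_smul, map_smul, skew φ halt x (L[(k:ℕ)].2), h2,
      skew φ halt x (L[(k:ℕ)].1), h1]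
    simp
  rw [Finset.sum_congr rfl (fun k _ => this k)]
  simp




/-- If rank is infinite, some vector has nonzero projection. -/
lemma exists_proj_ne (φ : LinearMap.BilinForm F V) (hrank : Module.rank F V = Cardinal.aleph0)
    (L : List (V × V)) : ∃ u : V, proj φ L u ≠ 0 := by
  by_contra h
  push_neg at h
  have hspan : (⊤ : Submodule F V) ≤ Submodule.span F (vecs L) := by
    intro v _
    have := sub_proj_mem_span φ L v
    rwa [h v, sub_zero] at this
  have h1 : Module.rank F V ≤ #(vecs L) := by
    calc Module.rank F V = Module.rank F (⊤ : Submodule F V) := (rank_top F V).symm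
    _ ≤ Module.rank F (Submodule.span F (vecs L)) := Submodule.rank_mono hspan
    _ ≤ #(vecs L) := rank_span_le _
  have h2 : #(vecs L) < Cardinal.aleph0 :=
    (vecs_finite L).lt_aleph0
  rw [hrank] at h1
  exact absurd (lt_of_le_of_lt h1 h2) (lt_irrefl _)

section Ext

lemma extend_aux (φ : LinearMap.BilinForm F V) (halt : ∀ v : V, φ v v = 0)
    (hnd : ∀ v : V, v ≠ 0 → ∃ u : V, φ v u ≠ 0) {L : List (V × V)} (hL : SympL φ L) {x : V} (hx0 : x ≠ 0)
    (hx : ∀ i : ℕ, ∀ hi : i < L.length, φ (L[i].1) x = 0 ∧ φ (L[i].2) x = 0) :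
    ∃ y : V, SympL φ (L ++ [(x, y)]) := by
  obtain ⟨t, ht⟩ := hnd x hx0
  have hxt : φ x (proj φ L t) = φ x t := apply_proj_of_orth φ halt hx t
  refine ⟨(φ x t)⁻¹ • proj φ L t, ?_⟩
  set y := (φ x t)⁻¹ • proj φ L t with hy
  have hxy : φ x y = 1 := by
    rw [hy, map_smul, smul_eq_mul, hxt, inv_mul_cancel₀ ht]
  have hyorth : ∀ i : ℕ, ∀ hi : i < L.length, φ (L[i].1) y = 0 ∧ φ (L[i].2) y = 0 := by
    intro i hi
    obtain ⟨h1, h2⟩ := apply_proj φ halt hL t hi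
    constructor <;> rw [hy, map_smul, smul_eq_mul]
    · rw [h1, mul_zero]
    · rw [h2, mul_zero]
  intro i j hi hj
  have hlen : (L ++ [(x, y)]).length = L.length + 1 := by simp
  rw [hlen] at hi hj
  have key : ∀ k : ℕ, ∀ hk : k < L.length + 1,
      (L ++ [(x, y)])[k]'(by simpa using hk) = if h : k < L.length then L[k] else (x, y) := by
    intro k hk
    by_cases h : k < L.length
    · rw [List.getElem_append_left h]; simp [h]
    · have : k = L.length := by omega
      subst this
      simp [List.getElem_concat_length]
  rw [key i hi, key j hj]
  by_cases h1 : i < L.length <;> by_cases h2 : j < L.length <;> simp only [h1, h2, dif_pos, dif_neg, dite_true, dite_false]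
  · exact hL i j h1 h2
  · have hij : i ≠ j := by omega
    exact ⟨by rw [(hyorth i h1).1]; simp [hij], (hx i h1).1, (hyorth i h1).2⟩
  · have hij : i ≠ j := by omega
    refine ⟨?_, ?_, ?_⟩
    · rw [skew φ halt x (L[j].2), (hx j h2).2]; simp [hij]
    · rw [skew φ halt x (L[j].1), (hx j h2).1]; simp
    · rw [skew φ halt y (L[j].2), (hyorth j h2).2]; simp
  · have hij : i = j := by omega
    exact ⟨by simp [hij, hxy], halt x, halt y⟩

lemma extend (φ : LinearMap.BilinForm F V) (halt : ∀ v : V, φ v v = 0)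
    (hnd : ∀ v : V, v ≠ 0 → ∃ u : V, φ v u ≠ 0) (hrank : Module.rank F V = Cardinal.aleph0)
    {L : List (V × V)} (hL : SympL φ L) (v : V) :
    ∃ p : V × V, SympL φ (L ++ [p]) ∧ v ∈ Submodule.span F (vecs (L ++ [p])) := by
  have hsub : ∀ p : V × V, Submodule.span F (vecs L) ≤ Submodule.span F (vecs (L ++ [p])) :=
    fun p => Submodule.span_mono (vecs_mono (fun q hq => List.mem_append_left _ hq))
  by_cases hv : proj φ L v = 0
  · obtain ⟨u, hu⟩ := exists_proj_ne φ hrank L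
    obtain ⟨y, hy⟩ := extend_aux φ halt hnd hL hu
      (fun i hi => apply_proj φ halt hL u hi)
    refine ⟨(proj φ L u, y), hy, hsub _ ?_⟩
    have := sub_proj_mem_span φ L v
    rwa [hv, sub_zero] at this
  · obtain ⟨y, hy⟩ := extend_aux φ halt hnd hL hv
      (fun i hi => apply_proj φ halt hL v hi)
    refine ⟨(proj φ L v, y), hy, ?_⟩
    have h1 : v - proj φ L v ∈ Submodule.span F (vecs (L ++ [(proj φ L v, y)])) :=
      hsub _ (sub_proj_mem_span φ L v)
    have h2 : proj φ L v ∈ Submodule.span F (vecs (L ++ [(proj φ L v, y)])) :=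
      Submodule.subset_span ⟨(proj φ L v, y), List.mem_append_right _ (List.mem_singleton_self _), Or.inl rfl⟩
    have := Submodule.add_mem _ h1 h2
    rwa [sub_add_cancel] at this


end Ext
section Build


open Classical in
/-- One step of the construction, via choice. -/
noncomputable def step (φ : LinearMap.BilinForm F V) (L : List (V × V)) (v : V) : V × V :=
  if h : ∃ p : V × V, SympL φ (L ++ [p]) ∧ v ∈ Submodule.span F (vecs (L ++ [p]))
  then h.choose else (0, 0)

/-- Iterated construction along a sequence `e`. -/
noncomputable def build (φ : LinearMap.BilinForm F V) (e : ℕ → V) : ℕ → List (V × V)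
  | 0 => []
  | n + 1 => build φ e n ++ [step φ (build φ e n) (e n)]

lemma build_succ (φ : LinearMap.BilinForm F V) (e : ℕ → V) (n : ℕ) :
    build φ e (n + 1) = build φ e n ++ [step φ (build φ e n) (e n)] := rfl

@[simp] lemma length_build (φ : LinearMap.BilinForm F V) (e : ℕ → V) (n : ℕ) :
    (build φ e n).length = n := by
  induction n with
  | zero => rfl
  | succ n ih => simp [build, ih]

lemma build_good (φ : LinearMap.BilinForm F V) (halt : ∀ v : V, φ v v = 0)
    (hnd : ∀ v : V, v ≠ 0 → ∃ u : V, φ v u ≠ 0)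
    (hrank : Module.rank F V = Cardinal.aleph0) (e : ℕ → V) (n : ℕ) :
    SympL φ (build φ e n) ∧
      ∀ m < n, e m ∈ Submodule.span F (vecs (build φ e n)) := by
  induction n with
  | zero =>
    constructor
    · intro i j hi hj; simp [build] at hi
    · intro m hm; omega
  | succ n ih =>
    obtain ⟨hS, hmem⟩ := ih
    have hex : ∃ p : V × V, SympL φ (build φ e n ++ [p]) ∧
        e n ∈ Submodule.span F (vecs (build φ e n ++ [p])) :=
      extend φ halt hnd hrank hS (e n)
    have hstep : step φ (build φ e n) (e n) = hex.choose := by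
      rw [step]; exact dif_pos hex
    have hspec := hex.choose_spec
    rw [← hstep] at hspec
    refine ⟨by rw [build_succ]; exact hspec.1, ?_⟩
    intro m hm
    rcases Nat.lt_succ_iff_lt_or_eq.mp hm with hm' | rfl
    · refine Submodule.span_mono (vecs_mono (fun q hq => ?_)) (hmem m hm')
      rw [build_succ]; exact List.mem_append_left _ hq
    · rw [build_succ]; exact hspec.2

lemma build_prefix_getElem (φ : LinearMap.BilinForm F V) (e : ℕ → V)
    {n N i : ℕ} (h : n ≤ N) (hi : i < n) :
    (build φ e N)[i]'(by simp; omega) = (build φ e n)[i]'(by simp; omega) := by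
  induction N with
  | zero => omega
  | succ N ihN =>
    rcases Nat.lt_succ_iff_lt_or_eq.mp (Nat.lt_succ_of_le h) with h' | rfl
    · have hn : n ≤ N := by omega
      have hlt : i < (build φ e N).length := by simp; omega
      have : (build φ e (N+1))[i]'(by simp; omega) = (build φ e N)[i]'hlt :=
        List.getElem_append_left hlt
      rw [this]
      exact ihN hn
    · rfl

end Build
section Gram

/-- The candidate basis sequence. -/
noncomputable def cseq (φ : LinearMap.BilinForm F V) (e : ℕ → V) (k : ℕ) : V :=
  if Even k then ((build φ e (k/2+1)).getD (k/2) (0,0)).1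
  else ((build φ e (k/2+1)).getD (k/2) (0,0)).2

lemma cseq_eq_fst (φ : LinearMap.BilinForm F V) (e : ℕ → V) {k N : ℕ}
    (hk : Even k) (h : k/2 < N) :
    cseq φ e k = ((build φ e N)[k/2]'(by simp; omega)).1 := by
  rw [cseq, if_pos hk]
  have hlen : k/2 < (build φ e (k/2+1)).length := by simp
  rw [List.getD_eq_getElem _ _ hlen,
    build_prefix_getElem φ e (show k/2+1 ≤ N by omega) (Nat.lt_succ_self _)]

lemma cseq_eq_snd (φ : LinearMap.BilinForm F V) (e : ℕ → V) {k N : ℕ}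
    (hk : ¬ Even k) (h : k/2 < N) :
    cseq φ e k = ((build φ e N)[k/2]'(by simp; omega)).2 := by
  rw [cseq, if_neg hk]
  have hlen : k/2 < (build φ e (k/2+1)).length := by simp
  rw [List.getD_eq_getElem _ _ hlen,
    build_prefix_getElem φ e (show k/2+1 ≤ N by omega) (Nat.lt_succ_self _)]

lemma gram (φ : LinearMap.BilinForm F V) (halt : ∀ v : V, φ v v = 0)
    (hnd : ∀ v : V, v ≠ 0 → ∃ u : V, φ v u ≠ 0)
    (hrank : Module.rank F V = Cardinal.aleph0) (e : ℕ → V) (a b : ℕ) :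
    φ (cseq φ e a) (cseq φ e b) =
      if b = a + 1 ∧ Even a then 1 else if a = b + 1 ∧ Even b then -1 else 0 := by
  set N := a + b + 2 with hN
  have hS := (build_good φ halt hnd hrank e N).1
  have hA : a / 2 < N := by omega
  have hB : b / 2 < N := by omega
  have hA' : a / 2 < (build φ e N).length := by simp; omega
  have hB' : b / 2 < (build φ e N).length := by simp; omega
  by_cases ha : Even a <;> by_cases hb : Even b
  · -- x x
    rw [cseq_eq_fst φ e ha hA, cseq_eq_fst φ e hb hB, (hS (a/2) (b/2) hA' hB').2.1]
    have ha' : a % 2 = 0 := Nat.even_iff.mp ha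
    have hb' : b % 2 = 0 := Nat.even_iff.mp hb
    simp only [Nat.even_iff]
    split_ifs <;> (try rfl) <;> (try norm_num) <;> (exfalso; omega)
  · -- x y
    rw [cseq_eq_fst φ e ha hA, cseq_eq_snd φ e hb hB, (hS (a/2) (b/2) hA' hB').1]
    have ha' : a % 2 = 0 := Nat.even_iff.mp ha
    have hb' : b % 2 = 1 := Nat.not_even_iff.mp hb
    simp only [Nat.even_iff]
    split_ifs <;> (try rfl) <;> (try norm_num) <;> (exfalso; omega)
  · -- y x
    rw [cseq_eq_snd φ e ha hA, cseq_eq_fst φ e hb hB,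
      skew φ halt _ _, (hS (b/2) (a/2) hB' hA').1]
    have ha' : a % 2 = 1 := Nat.not_even_iff.mp ha
    have hb' : b % 2 = 0 := Nat.even_iff.mp hb
    simp only [Nat.even_iff]
    split_ifs <;> (try rfl) <;> (try norm_num) <;> (exfalso; omega)
  · -- y y
    rw [cseq_eq_snd φ e ha hA, cseq_eq_snd φ e hb hB, (hS (a/2) (b/2) hA' hB').2.2]
    have ha' : a % 2 = 1 := Nat.not_even_iff.mp ha
    have hb' : b % 2 = 1 := Nat.not_even_iff.mp hb
    simp only [Nat.even_iff]
    split_ifs <;> (try rfl) <;> (try norm_num) <;> (exfalso; omega)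

end Gram
section Main

lemma cseq_two_mul (φ : LinearMap.BilinForm F V) (e : ℕ → V) {i N : ℕ} (h : i < N) :
    cseq φ e (2*i) = ((build φ e N)[i]'(by simp; omega)).1 := by
  rw [cseq, if_pos ⟨i, two_mul i⟩]
  have h2 : 2*i/2 = i := by omega
  rw [h2, List.getD_eq_getElem _ _ (by simp),
    build_prefix_getElem φ e (show i+1 ≤ N by omega) (Nat.lt_succ_self _)]

lemma cseq_two_mul_add_one (φ : LinearMap.BilinForm F V) (e : ℕ → V) {i N : ℕ} (h : i < N) :
    cseq φ e (2*i+1) = ((build φ e N)[i]'(by simp; omega)).2 := by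
  rw [cseq, if_neg (by simp [Nat.even_iff])]
  have h2 : (2*i+1)/2 = i := by omega
  rw [h2, List.getD_eq_getElem _ _ (by simp),
    build_prefix_getElem φ e (show i+1 ≤ N by omega) (Nat.lt_succ_self _)]

lemma exists_symp_basis (φ : LinearMap.BilinForm F V)
    (hrank : Module.rank F V = Cardinal.aleph0)
    (halt : ∀ v : V, φ v v = 0)
    (hnd : ∀ v : V, v ≠ 0 → ∃ u : V, φ v u ≠ 0) :
    ∃ b : Module.Basis ℕ F V, ∀ i j : ℕ, φ (b i) (b j) =
      if j = i + 1 ∧ Even i then 1 else if i = j + 1 ∧ Even j then -1 else 0 := by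
  classical
  let B := Module.Basis.ofVectorSpace F V
  have hmk : #(Module.Basis.ofVectorSpaceIndex F V) = Cardinal.aleph0 := by
    rw [B.mk_eq_rank'', hrank]
  obtain ⟨d⟩ := Cardinal.denumerable_iff.mpr hmk
  let σ := @Denumerable.eqv _ d
  let e := B.reindex σ
  set c := cseq φ (⇑e) with hc
  have hgram := gram φ halt hnd hrank (⇑e)
  have hli : LinearIndependent F c := by
    rw [linearIndependent_iff']
    intro s g hsum i hi
    rcases Nat.even_or_odd i with he | ho
    · have h0 : φ (∑ k ∈ s, g k • c k) (c (i+1)) = 0 := by rw [hsum]; simp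
      rw [map_sum, LinearMap.sum_apply] at h0
      have hterm : ∀ k ∈ s, φ (g k • c k) (c (i+1)) = if k = i then g k else 0 := by
        intro k _
        rw [map_smul, LinearMap.smul_apply, smul_eq_mul, hgram k (i+1)]
        by_cases hk : k = i
        · subst hk; simp [he]
        · have h1 : ¬(i+1 = k + 1 ∧ Even k) := fun ⟨h, _⟩ => hk (by omega)
          have h2 : ¬(k = (i+1) + 1 ∧ Even (i+1)) :=
            fun ⟨_, h⟩ => (Nat.even_add_one.mp h) he
          rw [if_neg h1, if_neg h2, mul_zero, if_neg hk]
      rw [Finset.sum_congr rfl hterm, Finset.sum_ite_eq' s i (fun k => g k), if_pos hi] at h0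
      exact h0
    · obtain ⟨m, hm⟩ := ho
      have h0 : φ (∑ k ∈ s, g k • c k) (c (2*m)) = 0 := by rw [hsum]; simp
      rw [map_sum, LinearMap.sum_apply] at h0
      have hterm : ∀ k ∈ s, φ (g k • c k) (c (2*m)) = if k = i then -g k else 0 := by
        intro k _
        rw [map_smul, LinearMap.smul_apply, smul_eq_mul, hgram k (2*m)]
        by_cases hk : k = i
        · subst hk
          have h1 : ¬(2*m = k + 1 ∧ Even k) := fun ⟨h, _⟩ => by omega
          have h2 : k = 2*m + 1 ∧ Even (2*m) := ⟨hm, ⟨m, two_mul m⟩⟩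
          rw [if_neg h1, if_pos h2, if_pos rfl]; ring
        · have h1 : ¬(2*m = k + 1 ∧ Even k) := by
            rintro ⟨h, hek⟩
            rw [Nat.even_iff] at hek; omega
          have h2 : ¬(k = 2*m + 1 ∧ Even (2*m)) := fun ⟨h, _⟩ => hk (by omega)
          rw [if_neg h1, if_neg h2, mul_zero, if_neg hk]
      rw [Finset.sum_congr rfl hterm, Finset.sum_ite_eq' s i (fun k => -g k), if_pos hi] at h0
      exact neg_eq_zero.mp h0
  have hsp : ⊤ ≤ Submodule.span F (Set.range c) := by
    rw [← e.span_eq]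
    refine Submodule.span_le.mpr ?_
    rintro w ⟨n, rfl⟩
    have hmem := (build_good φ halt hnd hrank (⇑e) (n+1)).2 n (Nat.lt_succ_self n)
    have hsub : vecs (build φ (⇑e) (n+1)) ⊆ Set.range c := by
      rintro w ⟨p, hp, hw | hw⟩
      · obtain ⟨idx, hidx, rfl⟩ := List.mem_iff_getElem.mp hp
        have hidx' : idx < n + 1 := by simpa using hidx
        exact ⟨2*idx, by rw [hc, cseq_two_mul φ (⇑e) hidx', hw]⟩
      · obtain ⟨idx, hidx, rfl⟩ := List.mem_iff_getElem.mp hp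
        have hidx' : idx < n + 1 := by simpa using hidx
        exact ⟨2*idx+1, by rw [hc, cseq_two_mul_add_one φ (⇑e) hidx', hw]⟩
    exact Submodule.span_mono hsub hmem
  refine ⟨Module.Basis.mk hli hsp, fun i j => ?_⟩
  rw [Module.Basis.mk_apply, Module.Basis.mk_apply]
  exact hgram i j

end Main
end SympAux


/-- Every nondegenerate alternating bilinear form on a vector space of
countably infinite dimension admits a symplectic basis (indexed by `ℕ`, with
`φ (b (2i)) (b (2i+1)) = 1` and `φ (b i) (b j) = 0` for all other pairs `i < j`).
Consequently, any two nondegenerate alternating bilinear forms on vector spaces of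
countably infinite dimension over the same field are isometric. -/
theorem symplectic_basis_of_countable_dim
    {F : Type*} [Field F]
    {V : Type*} [AddCommGroup V] [Module F V] (φ : LinearMap.BilinForm F V)
    (hrank : Module.rank F V = Cardinal.aleph0)
    (halt : ∀ v : V, φ v v = 0)
    (hnd : ∀ v : V, v ≠ 0 → ∃ u : V, φ v u ≠ 0)
    {V' : Type*} [AddCommGroup V'] [Module F V'] (φ' : LinearMap.BilinForm F V')
    (hrank' : Module.rank F V' = Cardinal.aleph0)
    (halt' : ∀ v : V', φ' v v = 0)
    (hnd' : ∀ v : V', v ≠ 0 → ∃ u : V', φ' v u ≠ 0) :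
    (∃ b : Module.Basis ℕ F V, ∀ i j : ℕ, i < j →
        φ (b i) (b j) = if j = i + 1 ∧ Even i then 1 else 0) ∧
      ∃ T : V ≃ₗ[F] V', ∀ v u : V, φ' (T v) (T u) = φ v u := by
  obtain ⟨b, hb⟩ := SympAux.exists_symp_basis φ hrank halt hnd
  obtain ⟨b', hb'⟩ := SympAux.exists_symp_basis φ' hrank' halt' hnd'
  constructor
  · refine ⟨b, fun i j hij => ?_⟩
    rw [hb i j]
    have hB : ¬(i = j + 1 ∧ Even j) := fun ⟨h, _⟩ => by omega
    by_cases hA : (j = i + 1 ∧ Even i) <;> simp [hA, hB]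
  · refine ⟨b.equiv b' (Equiv.refl ℕ), ?_⟩
    have key : φ'.compl₁₂ (↑(b.equiv b' (Equiv.refl ℕ)) : V →ₗ[F] V')
        (↑(b.equiv b' (Equiv.refl ℕ)) : V →ₗ[F] V') = φ := by
      apply b.ext; intro i; apply b.ext; intro j
      simp only [LinearMap.compl₁₂_apply, LinearEquiv.coe_coe, Module.Basis.equiv_apply,
        Equiv.refl_apply]
      rw [hb' i j, hb i j]
    intro v u
    have h2 := LinearMap.congr_fun (LinearMap.congr_fun key v) u
    simpa [LinearMap.compl₁₂_apply] using h2
end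

section
/- An inverse limit of a surjective inverse system of pro-p Demushkin groups is either a Demushkin group or a free pro-p group. More precisely, if G = lim G_i with each H^2(G_i, F_p) ≅ F_p and nondegenerate cup product on H^1(G_i, F_p), then either H^2(G, F_p) = 0 (so cd(G) ≤ 1 and G is free pro-p) or H^2(G, F_p) ≅ F_p with nondegenerate cup product on H^1(G, F_p). -/
/-- An inverse limit of a surjective inverse system of pro-`p` Demushkin
groups is either Demushkin or free pro-`p`.  Cohomologically: if `G = lim Gᵢ`, so that
`H¹(G)` (resp. `H²(G)`) is the directed colimit via inflation of the `H¹(Gᵢ)`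
(resp. `H²(Gᵢ)`), the inflations on `H¹` being injective (the transition maps are
surjective) and compatible with cup products, and each `Gᵢ` satisfies
`dim H²(Gᵢ) = 1` with nondegenerate cup product, then either `H²(G) = 0`
(so `cd G ≤ 1` and `G` is free pro-`p`) or `dim H²(G) = 1` and the cup product on
`H¹(G)` is nondegenerate (so `G` is Demushkin). -/
theorem invLimit_demushkin_or_free (p : ℕ) [Fact p.Prime]
    {ι : Type*} [Preorder ι] [IsDirected ι (· ≤ ·)] [Nonempty ι]
    (H1 H2 : ι → Type*)
    [∀ i, AddCommGroup (H1 i)] [∀ i, Module (ZMod p) (H1 i)]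
    [∀ i, AddCommGroup (H2 i)] [∀ i, Module (ZMod p) (H2 i)]
    (cup : ∀ i, H1 i →ₗ[ZMod p] H1 i →ₗ[ZMod p] H2 i)
    (hdim : ∀ i, Module.finrank (ZMod p) (H2 i) = 1)
    (hnd : ∀ i, ∀ x : H1 i, x ≠ 0 → ∃ y : H1 i, cup i x y ≠ 0)
    (H1G H2G : Type*) [AddCommGroup H1G] [Module (ZMod p) H1G]
    [AddCommGroup H2G] [Module (ZMod p) H2G]
    (cupG : H1G →ₗ[ZMod p] H1G →ₗ[ZMod p] H2G)
    (inf1 : ∀ i, H1 i →ₗ[ZMod p] H1G) (inf2 : ∀ i, H2 i →ₗ[ZMod p] H2G)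
    (hinj : ∀ i, Function.Injective (inf1 i))
    (hmono1 : ∀ i j, i ≤ j → LinearMap.range (inf1 i) ≤ LinearMap.range (inf1 j))
    (hmono2 : ∀ i j, i ≤ j → LinearMap.range (inf2 i) ≤ LinearMap.range (inf2 j))
    (hcolim1 : ∀ x : H1G, ∃ i, x ∈ LinearMap.range (inf1 i))
    (hcolim2 : ∀ z : H2G, ∃ i, z ∈ LinearMap.range (inf2 i))
    (hcup : ∀ i (x y : H1 i), inf2 i (cup i x y) = cupG (inf1 i x) (inf1 i y)) :
    Subsingleton H2G ∨
      (Module.finrank (ZMod p) H2G = 1 ∧ ∀ x : H1G, x ≠ 0 → ∃ y : H1G, cupG x y ≠ 0) := by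
  by_cases hzero : ∀ i, ∀ v : H2 i, inf2 i v = 0
  · left
    refine subsingleton_iff.2 fun a b => ?_
    have hz : ∀ z : H2G, z = 0 := by
      intro z
      obtain ⟨i, u, hu⟩ := hcolim2 z
      rw [← hu, hzero i u]
    rw [hz a, hz b]
  · right
    push_neg at hzero
    obtain ⟨i₀, v₀, hv₀⟩ := hzero
    set e : H2G := inf2 i₀ v₀ with he_def
    -- spanning vector for each H2 k
    have hspan : ∀ k, ∃ w : H2 k, w ≠ 0 ∧ ∀ u : H2 k, ∃ c : ZMod p, c • w = u := by
      intro k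
      obtain ⟨w, hw0, hw⟩ := finrank_eq_one_iff'.1 (hdim k)
      exact ⟨w, hw0, hw⟩
    -- for k ≥ i₀, inf2 k is injective
    have hinj2 : ∀ k, i₀ ≤ k → Function.Injective (inf2 k) := by
      intro k hk
      obtain ⟨w, hw0, hw⟩ := hspan k
      have hew : ∃ c : ZMod p, c • inf2 k w = e := by
        obtain ⟨u, hu⟩ := hmono2 i₀ k hk ⟨v₀, rfl⟩
        obtain ⟨c, hc⟩ := hw u
        exact ⟨c, by rw [he_def, ← hu, ← hc, map_smul]⟩
      have hwne : inf2 k w ≠ 0 := by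
        rintro h0
        obtain ⟨c, hc⟩ := hew
        rw [h0, smul_zero] at hc
        exact hv₀ hc.symm
      intro a b hab
      obtain ⟨ca, hca⟩ := hw a
      obtain ⟨cb, hcb⟩ := hw b
      have : ca • inf2 k w = cb • inf2 k w := by
        rw [← map_smul, ← map_smul, hca, hcb, hab]
      have hcc : ca = cb := by
        by_contra hne
        have := sub_eq_zero.2 this
        rw [← sub_smul] at this
        rcases smul_eq_zero.1 this with h | h
        · exact hne (sub_eq_zero.1 h)
        · exact hwne h
      rw [← hca, ← hcb, hcc]
    have he0 : e ≠ 0 := hv₀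
    -- every element of H2G is a multiple of e
    have hgen : ∀ z : H2G, ∃ c : ZMod p, c • e = z := by
      intro z
      obtain ⟨i, hz⟩ := hcolim2 z
      obtain ⟨k, hk1, hk2⟩ := directed_of (· ≤ ·) i i₀
      obtain ⟨u, hu⟩ := hmono2 i k hk1 hz
      obtain ⟨w, hw0, hw⟩ := hspan k
      obtain ⟨ue, hue⟩ := hmono2 i₀ k hk2 ⟨v₀, rfl⟩
      obtain ⟨ce, hce⟩ := hw ue
      obtain ⟨cu, hcu⟩ := hw u
      have hce0 : ce ≠ 0 := by
        rintro rfl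
        rw [zero_smul] at hce
        rw [← hce, map_zero] at hue
        exact he0 hue.symm
      refine ⟨cu * ce⁻¹, ?_⟩
      have hekw : e = ce • inf2 k w := by rw [he_def, ← hue, ← hce, map_smul]
      have hzkw : z = cu • inf2 k w := by rw [← hu, ← hcu, map_smul]
      rw [hekw, hzkw, smul_smul, mul_assoc, inv_mul_cancel₀ hce0, mul_one]
    constructor
    · exact finrank_eq_one_iff'.2 ⟨e, he0, hgen⟩
    · intro x hx
      obtain ⟨i, hxi⟩ := hcolim1 x
      obtain ⟨k, hk1, hk2⟩ := directed_of (· ≤ ·) i i₀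
      obtain ⟨a, ha⟩ := hmono1 i k hk1 hxi
      have ha0 : a ≠ 0 := by
        rintro rfl
        rw [map_zero] at ha
        exact hx ha.symm
      obtain ⟨b, hb⟩ := hnd k a ha0
      refine ⟨inf1 k b, ?_⟩
      rw [← ha, ← hcup]
      exact fun h => hb (hinj2 k hk2 (by rw [h, map_zero]))
end

section
/- Let K' be a field and let K = K'(x_i : i ∈ μ) be a purely transcendental extension of K' in μ variables, where μ is an infinite cardinal. Then the classes of x_i in K^×/(K^×)^p are F_p-linearly independent, hence |K^×/(K^×)^p| ≥ μ. -/
open Cardinal MvPolynomial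

variable {K' : Type} [Field K'] {ι : Type}

theorem myPrimeX (i : ι) : Prime (MvPolynomial.X i : MvPolynomial ι K') := by
  classical
  let e : MvPolynomial ι K' ≃ₐ[K'] Polynomial (MvPolynomial {j : ι // j ≠ i} K') :=
    (MvPolynomial.renameEquiv K' (Equiv.optionSubtypeNe i).symm).trans
      (MvPolynomial.optionEquivLeft K' _)
  rw [← MulEquiv.prime_iff e.toRingEquiv.toMulEquiv]
  have he : e (MvPolynomial.X i) = Polynomial.X := by
    show (MvPolynomial.optionEquivLeft K' _) ((MvPolynomial.renameEquiv K' _) (MvPolynomial.X i)) = _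
    rw [MvPolynomial.renameEquiv_apply, MvPolynomial.rename_X,
      Equiv.optionSubtypeNe_symm_self, MvPolynomial.optionEquivLeft_X_none]
  show Prime (e (MvPolynomial.X i))
  rw [he]
  exact Polynomial.prime_X

theorem myXndvd {i j : ι} (h : j ≠ i) : ¬ ((MvPolynomial.X i : MvPolynomial ι K') ∣ MvPolynomial.X j) := by
  classical
  intro hd
  have := map_dvd (MvPolynomial.aeval
      (fun k => if k = i then 0 else MvPolynomial.X k) :
      MvPolynomial ι K' →ₐ[K'] MvPolynomial ι K') hd
  rw [MvPolynomial.aeval_X, MvPolynomial.aeval_X, if_pos rfl, if_neg h] at this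
  exact MvPolynomial.X_ne_zero j (zero_dvd_iff.mp this)

theorem myFin (i : ι) {a : MvPolynomial ι K'} (ha : a ≠ 0) :
    FiniteMultiplicity (MvPolynomial.X i) a :=
  FiniteMultiplicity.of_not_isUnit (myPrimeX i).not_isUnit ha

theorem myMultProd (i : ι) (s : Finset ι) (α : ι → ℕ) (hi : i ∈ s) :
    emultiplicity (MvPolynomial.X i) (∏ j ∈ s, (MvPolynomial.X j : MvPolynomial ι K') ^ α j)
      = α i := by
  classical
  rw [Finset.emultiplicity_prod (myPrimeX i)]
  rw [Finset.sum_eq_single_of_mem i hi]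
  · rw [emultiplicity_pow (myPrimeX i),
      (myFin i (MvPolynomial.X_ne_zero i)).emultiplicity_self, mul_one]
  · intro j _ hj
    rw [emultiplicity_pow (myPrimeX i), emultiplicity_eq_zero.mpr (myXndvd hj), mul_zero]

theorem myKey (p : ℕ) (hp : p.Prime) (i : ι) (s : Finset ι) (α : ι → ℕ)
    (hi : i ∈ s) (hα : ¬ p ∣ α i) (a b : MvPolynomial ι K') (ha : a ≠ 0) (hb : b ≠ 0)
    (h : a ^ p = b ^ p * ∏ j ∈ s, (MvPolynomial.X j : MvPolynomial ι K') ^ α j) : False := by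
  have hm := congrArg (emultiplicity (MvPolynomial.X i)) h
  rw [emultiplicity_pow (myPrimeX i), emultiplicity_mul (myPrimeX i),
    emultiplicity_pow (myPrimeX i), myMultProd i s α hi,
    (myFin i ha).emultiplicity_eq_multiplicity,
    (myFin i hb).emultiplicity_eq_multiplicity] at hm
  set Ma := multiplicity (MvPolynomial.X i) a
  set Mb := multiplicity (MvPolynomial.X i) b
  have : (↑(p * Ma) : ℕ∞) = (↑(p * Mb + α i) : ℕ∞) := by push_cast; exact hm
  have h2 : p * Ma = p * Mb + α i := Nat.cast_inj.mp this
  exact hα ⟨Ma - Mb, by rw [Nat.mul_sub]; omega⟩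

theorem myKeyField (p : ℕ) (hp : p.Prime) (s : Finset ι) (α : ι → ℕ)
    (h : ∃ i ∈ s, ¬ p ∣ α i) :
    ¬ ∃ y : FractionRing (MvPolynomial ι K'), y ^ p =
      ∏ i ∈ s, (algebraMap (MvPolynomial ι K') (FractionRing (MvPolynomial ι K'))
        (MvPolynomial.X i)) ^ α i := by
  obtain ⟨i, hi, hα⟩ := h
  rintro ⟨y, hy⟩
  obtain ⟨a, b, hbmem, rfl⟩ := IsFractionRing.div_surjective (A := MvPolynomial ι K') y
  have hb : b ≠ 0 := nonZeroDivisors.ne_zero hbmem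
  have hB : (algebraMap (MvPolynomial ι K') (FractionRing (MvPolynomial ι K'))) b ≠ 0 := by
    exact IsFractionRing.to_map_ne_zero_of_mem_nonZeroDivisors hbmem
  rw [div_pow, div_eq_iff (pow_ne_zero p hB)] at hy
  have hEq : a ^ p = b ^ p * ∏ j ∈ s, (MvPolynomial.X j : MvPolynomial ι K') ^ α j := by
    apply IsFractionRing.injective (MvPolynomial ι K') (FractionRing (MvPolynomial ι K'))
    rw [map_mul, map_pow, map_pow, map_prod]
    simp only [map_pow]
    rw [hy, mul_comm]
  have hprod : (∏ j ∈ s, (MvPolynomial.X j : MvPolynomial ι K') ^ α j) ≠ 0 :=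
    Finset.prod_ne_zero_iff.mpr fun j _ => pow_ne_zero _ (MvPolynomial.X_ne_zero j)
  have ha : a ≠ 0 := by
    intro h0
    rw [h0, zero_pow hp.ne_zero] at hEq
    exact (mul_ne_zero (pow_ne_zero p hb) hprod) hEq.symm
  exact myKey p hp i s α hi hα a b ha hb hEq

theorem myFieldCalc {F : Type} [Field F] (A B C : F) (hA : A ≠ 0) :
    (A⁻¹ * B) * (C * A) = C * B := by
  field_simp

/-- Let `K = K'(xᵢ : i ∈ μ)` be a purely transcendental extension of a
field `K'` in infinitely many variables (realized as the fraction field of the polynomial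
ring `K'[xᵢ : i ∈ ι]`).  Then the classes of the variables `xᵢ` in `K^×/(K^×)^p` are
`𝔽_p`-linearly independent: no finite product `x_{i₁}^{α₁} ⋯ x_{iₙ}^{αₙ}` with not all
exponents divisible by `p` is a `p`-th power in `K`.  Hence `|K^×/(K^×)^p| ≥ μ`. -/
theorem rational_function_field_pth_power_classes
    (p : ℕ) [Fact p.Prime] (K' : Type) [Field K'] (ι : Type) [Infinite ι] :
    (∀ (s : Finset ι) (α : ι → ℕ), (∃ i ∈ s, ¬ (p ∣ α i)) →
      ¬ ∃ y : FractionRing (MvPolynomial ι K'), y ^ p =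
        ∏ i ∈ s, (algebraMap (MvPolynomial ι K') (FractionRing (MvPolynomial ι K'))
          (MvPolynomial.X i)) ^ α i) ∧
    Cardinal.mk ι ≤ Cardinal.mk
      ((FractionRing (MvPolynomial ι K'))ˣ ⧸
        MonoidHom.range (powMonoidHom p :
          (FractionRing (MvPolynomial ι K'))ˣ →* (FractionRing (MvPolynomial ι K'))ˣ)) := by
  classical
  have hp := Fact.out (p := p.Prime)
  refine ⟨fun s α h => myKeyField p hp s α h, ?_⟩
  have hX : ∀ i : ι,
      (algebraMap (MvPolynomial ι K') (FractionRing (MvPolynomial ι K')) (MvPolynomial.X i))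
        ≠ 0 := fun i =>
    IsFractionRing.to_map_ne_zero_of_mem_nonZeroDivisors
      (mem_nonZeroDivisors_of_ne_zero (MvPolynomial.X_ne_zero i))
  have hu : ∀ i : ι, IsUnit
      (algebraMap (MvPolynomial ι K') (FractionRing (MvPolynomial ι K')) (MvPolynomial.X i)) :=
    fun i => isUnit_iff_ne_zero.mpr (hX i)
  let u : ι → (FractionRing (MvPolynomial ι K'))ˣ := fun i => (hu i).unit
  have hucoe : ∀ i : ι, (u i : FractionRing (MvPolynomial ι K')) =
      algebraMap (MvPolynomial ι K') (FractionRing (MvPolynomial ι K')) (MvPolynomial.X i) :=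
    fun i => (hu i).unit_spec
  let f : ι → ((FractionRing (MvPolynomial ι K'))ˣ ⧸
      MonoidHom.range (powMonoidHom p :
        (FractionRing (MvPolynomial ι K'))ˣ →* (FractionRing (MvPolynomial ι K'))ˣ)) :=
    fun i => QuotientGroup.mk (u i)
  have hinj : Function.Injective f := by
    intro i j hij
    by_contra hne
    rw [QuotientGroup.eq] at hij
    obtain ⟨v, hv⟩ := hij
    have hv' : (v : FractionRing (MvPolynomial ι K')) ^ p =
        (algebraMap (MvPolynomial ι K') (FractionRing (MvPolynomial ι K'))
          (MvPolynomial.X i))⁻¹ *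
        algebraMap (MvPolynomial ι K') (FractionRing (MvPolynomial ι K'))
          (MvPolynomial.X j) := by
      have := congrArg (Units.val) hv
      simpa [powMonoidHom, hucoe] using this
    have hne' : i ≠ j := fun h => hne (h ▸ rfl)
    apply myKeyField (K' := K') p hp {i, j} (fun k => if k = j then 1 else p - 1)
      ⟨j, by simp, by simp [Nat.dvd_one, hp.ne_one]⟩
    refine ⟨(v : FractionRing (MvPolynomial ι K')) *
      algebraMap (MvPolynomial ι K') (FractionRing (MvPolynomial ι K')) (MvPolynomial.X i), ?_⟩
    rw [Finset.prod_pair hne']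
    simp only [eq_self_iff_true, if_true, if_neg hne', pow_one]
    have hstep : (algebraMap (MvPolynomial ι K') (FractionRing (MvPolynomial ι K'))
        (MvPolynomial.X i)) ^ p =
        (algebraMap (MvPolynomial ι K') (FractionRing (MvPolynomial ι K'))
          (MvPolynomial.X i)) ^ (p - 1) *
        algebraMap (MvPolynomial ι K') (FractionRing (MvPolynomial ι K'))
          (MvPolynomial.X i) := by
      rw [← pow_succ]; congr 1; exact (Nat.succ_pred_eq_of_pos hp.pos).symm
    rw [mul_pow, hv', hstep]
    exact myFieldCalc _ _ _ (hX i)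
  exact Cardinal.mk_le_of_injective hinj
end
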